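/- arXiv:1405.5758 — 2 statements merged into one kernel-verified Lean document; each statement's English description precedes it below -/
import Mathlib

section
/- Let V_h be a finite-dimensional real vector space with norms ‖·‖ (L²-norm), |||·|||_h, and a subspace V_H with norm |||·|||_H. Let I_H : V_h → V_H be linear with: ‖v − I_H(v)‖ ≤ C H |||v|||_h for all v ∈ V_h, I_H ∘ (I_H|_{V_H})^{-1} ∘ I_H = I_H, |||(I_H|_{V_H})^{-1}(v_H)|||_H ≤ C |||v_H|||_H and ‖I_H(v_H)‖ ≤ C |||v_H|||_H for v_H ∈ V_H, |||I_H(v)|||_H ≤ C |||v|||_h for v ∈ V_h, and ‖v_H − I_H(v_H)‖ ≤ C H |||v_H|||_H for v_H ∈ V_H. Then for every decomposition v^{ms} = v_H + v^f with v_H ∈ V_H and v^f ∈ ker(I_H), there holds ‖v^f‖ ≤ C' H |||v^{ms}|||_h for a constant C' depending only on C. -/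
theorem stmt4 {V : Type*} [AddCommGroup V] [Module ℝ V] [Module.Finite ℝ V]
    (VH : Submodule ℝ V)
    (N Nh NH : V → ℝ) (H : ℝ) (hH : 0 < H)
    (C : ℝ) (hC : 0 < C)
    (hNtri : ∀ v w : V, N (v + w) ≤ N v + N w)
    (hNneg : ∀ v : V, N (-v) = N v)
    (IH : V →ₗ[ℝ] V) (hrange : ∀ v, IH v ∈ VH)
    (J : V →ₗ[ℝ] V)
    (hJmem : ∀ v ∈ VH, J v ∈ VH)
    (hJleft : ∀ v ∈ VH, J (IH v) = v)
    (hJright : ∀ v ∈ VH, IH (J v) = v)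
    (h1 : ∀ v : V, N (v - IH v) ≤ C * H * Nh v)
    (h2 : ∀ v : V, IH (J (IH v)) = IH v)
    (h3 : ∀ v ∈ VH, NH (J v) ≤ C * NH v)
    (h4 : ∀ v ∈ VH, N (IH v) ≤ C * NH v)
    (h5 : ∀ v : V, NH (IH v) ≤ C * Nh v)
    (h6 : ∀ v ∈ VH, N (v - IH v) ≤ C * H * NH v) :
    ∃ C' : ℝ, 0 < C' ∧
      ∀ vH ∈ VH, ∀ vf : V, IH vf = 0 →
        N vf ≤ C' * H * Nh (vH + vf) := by
  refine ⟨C + C ^ 3, by positivity, ?_⟩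
  intro vH hvH vf hvf
  set v := vH + vf with hv
  have hIv : IH v = IH vH := by simp [hv, map_add, hvf]
  have hJv : J (IH v) = vH := by rw [hIv, hJleft vH hvH]
  have hsplit : vf = (v - IH v) + (IH v - J (IH v)) := by
    rw [hJv]; simp only [hv]; abel
  have hmem : IH v ∈ VH := hrange v
  have hJmem' : J (IH v) ∈ VH := hJmem _ hmem
  have e : IH v - J (IH v) = -(J (IH v) - IH (J (IH v))) := by
    rw [h2 v]; abel
  have b2 : N (IH v - J (IH v)) ≤ C * H * NH (J (IH v)) := by
    rw [e, hNneg]; exact h6 _ hJmem'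
  have b3 : NH (J (IH v)) ≤ C * NH (IH v) := h3 _ hmem
  have b4 : NH (IH v) ≤ C * Nh v := h5 v
  have b1 : N (v - IH v) ≤ C * H * Nh v := h1 v
  have btri : N vf ≤ N (v - IH v) + N (IH v - J (IH v)) := by
    rw [hsplit]; exact hNtri _ _
  nlinarith [mul_le_mul_of_nonneg_left b3 (le_of_lt (mul_pos hC hH)),
    mul_le_mul_of_nonneg_left b4 (by positivity : (0:ℝ) ≤ C * H * C)]
end

section
/- Let a_h be a symmetric coercive bounded bilinear form on a finite-dimensional real space V with α|||v|||² ≤ a_h(v,v) and a_h(u,v) ≤ β|||u||||||v|||. Suppose Φ^{ms} = Φ_H + Q(Φ_H), and there are constants C, m, and H ∈ (0,1) with: (i) |||Φ_H||| ≤ C H^{(1−m)/2} |||Φ_H|||_H where |||Φ_H|||_H ≤ C |||Φ^{ms}|||; (ii) |a_h(Φ^{ms}, Q(Φ_H))| ≤ C H^{n−1} (1 + H^{(1−m)/2}) |||Φ^{ms}|||² with n = (m+3)/2. Then a_h(Φ^{ms}, Φ_H) ≥ (α − C' H) |||Φ^{ms}|||² for a constant C' independent of H, and hence, dividing by |||Φ_H|||_H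 ≤ C|||Φ^{ms}|||, the inf-sup bound a_h(Φ^{ms}, Φ_H)/(|||Φ^{ms}||| |||Φ_H|||_H) ≥ C₁(α − C₂ H) holds. -/
set_option maxHeartbeats 2000000 in
theorem stmt12 {V : Type*} [AddCommGroup V] [Module ℝ V]
    (a : V →ₗ[ℝ] V →ₗ[ℝ] ℝ) (hsymm : ∀ u v, a u v = a v u)
    (n nH : V → ℝ) (α β C m : ℝ)
    (hα : 0 < α) (hC : 0 < C) (hm : 1 < m)
    (hnnn : ∀ v, 0 ≤ n v) (hnHnn : ∀ v, 0 ≤ nH v)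
    (hcoer : ∀ v, α * (n v) ^ 2 ≤ a v v)
    (hcont : ∀ u v, a u v ≤ β * n u * n v) :
    ∃ C' C₁ C₂ : ℝ, 0 < C' ∧ 0 < C₁ ∧ 0 < C₂ ∧
      ∀ H : ℝ, 0 < H → H < 1 →
      ∀ ΦH QΦH : V,
        n ΦH ≤ C * H ^ ((1 - m) / 2) * nH ΦH →
        nH ΦH ≤ C * n (ΦH + QΦH) →
        |a (ΦH + QΦH) QΦH| ≤
          C * H ^ ((m + 1) / 2) * (1 + H ^ ((1 - m) / 2)) * (n (ΦH + QΦH)) ^ 2 →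
        (α - C' * H) * (n (ΦH + QΦH)) ^ 2 ≤ a (ΦH + QΦH) ΦH ∧
        C₁ * (α - C₂ * H) * n (ΦH + QΦH) * nH ΦH ≤ a (ΦH + QΦH) ΦH := by
  have hpsd : ∀ v, 0 ≤ a v v := fun v => le_trans (by positivity) (hcoer v)
  obtain ⟨B, hBdef⟩ : ∃ x : ℝ, x = max β 0 := ⟨_, rfl⟩
  have hB : 0 ≤ B := hBdef ▸ le_max_right _ _
  have hβB : β ≤ B := hBdef ▸ le_max_left _ _
  -- Cauchy–Schwarz for the PSD form
  have hCS : ∀ u v, (a u v) ^ 2 ≤ a u u * a v v := by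
    intro u v
    have h' : ∀ x : ℝ, 0 ≤ a u u * (x * x) + (2 * a u v) * x + a v v := by
      intro x
      have h0 := hpsd (v + x • u)
      simp only [map_add, map_smul, LinearMap.add_apply, LinearMap.smul_apply,
        smul_eq_mul] at h0
      rw [hsymm v u] at h0
      nlinarith [h0]
    have hd := discrim_le_zero h'
    rw [discrim] at hd
    nlinarith [hd]
  -- lower continuity bound
  have hlow : ∀ u v, -(B * n u * n v) ≤ a u v := by
    intro u v
    have h1 : a u u ≤ B * (n u * n u) := by nlinarith [hcont u u, mul_self_nonneg (n u)]
    have h2 : a v v ≤ B * (n v * n v) := by nlinarith [hcont v v, mul_self_nonneg (n v)]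
    have h3 : (a u v) ^ 2 ≤ (B * n u * n v) ^ 2 := by
      nlinarith [hCS u v, hpsd u, hpsd v, mul_self_nonneg (n u), mul_self_nonneg (n v),
        hnnn u, hnnn v]
    nlinarith [h3, mul_nonneg (mul_nonneg hB (hnnn u)) (hnnn v),
      sq_nonneg (a u v + B * n u * n v)]
  obtain ⟨K, hKdef⟩ : ∃ x : ℝ, x = (α / (2 * C)) ^ ((1 - m) / 2) := ⟨_, rfl⟩
  have hK : 0 < K := hKdef ▸ Real.rpow_pos_of_pos (by positivity) _
  obtain ⟨C₂, hC2def⟩ : ∃ x : ℝ, x = 2 * C + 2 * C * (2 * α + B * C ^ 2 * K) / α := ⟨_, rfl⟩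
  have hC2pos : 0 < C₂ := by rw [hC2def]; positivity
  refine ⟨2 * C, 1 / C, C₂, by positivity, by positivity, hC2pos, ?_⟩
  intro H hH hH1 ΦH QΦH h1 h2 h3
  have hsplit : a (ΦH + QΦH) ΦH = a (ΦH + QΦH) (ΦH + QΦH) - a (ΦH + QΦH) QΦH := by
    have h := (a (ΦH + QΦH)).map_sub (ΦH + QΦH) QΦH
    rwa [add_sub_cancel_right] at h
  have hnms := hnnn (ΦH + QΦH)
  have hnH := hnHnn ΦH
  -- exponent arithmetic
  have hE : H ^ ((m + 1) / 2) * H ^ ((1 - m) / 2) = H := by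
    rw [← Real.rpow_add hH, show (m + 1) / 2 + (1 - m) / 2 = 1 by ring, Real.rpow_one]
  have hE2 : H ^ ((m + 1) / 2) ≤ H := by
    have := Real.rpow_le_rpow_of_exponent_ge hH hH1.le (by linarith : (1 : ℝ) ≤ (m + 1) / 2)
    rwa [Real.rpow_one] at this
  have hQnn : (0:ℝ) ≤ H ^ ((1 - m) / 2) := Real.rpow_nonneg hH.le _
  have hbound : |a (ΦH + QΦH) QΦH| ≤ 2 * C * H * (n (ΦH + QΦH)) ^ 2 := by
    refine le_trans h3 ?_
    have e2 := mul_le_mul_of_nonneg_right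
      (mul_le_mul_of_nonneg_left hE2 hC.le) (sq_nonneg (n (ΦH + QΦH)))
    calc C * H ^ ((m + 1) / 2) * (1 + H ^ ((1 - m) / 2)) * (n (ΦH + QΦH)) ^ 2
        = C * (H ^ ((m + 1) / 2) * H ^ ((1 - m) / 2)) * (n (ΦH + QΦH)) ^ 2
          + C * H ^ ((m + 1) / 2) * (n (ΦH + QΦH)) ^ 2 := by ring
      _ = C * H * (n (ΦH + QΦH)) ^ 2 + C * H ^ ((m + 1) / 2) * (n (ΦH + QΦH)) ^ 2 := by
          rw [hE]
      _ ≤ C * H * (n (ΦH + QΦH)) ^ 2 + C * H * (n (ΦH + QΦH)) ^ 2 := by linarith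
      _ = 2 * C * H * (n (ΦH + QΦH)) ^ 2 := by ring
  have habs := abs_le.mp hbound
  have hfirst : (α - 2 * C * H) * (n (ΦH + QΦH)) ^ 2 ≤ a (ΦH + QΦH) ΦH := by
    rw [hsplit]
    nlinarith [hcoer (ΦH + QΦH), habs.2]
  refine ⟨hfirst, ?_⟩
  have hn2 : n (ΦH + QΦH) * nH ΦH ≤ C * (n (ΦH + QΦH)) ^ 2 := by
    nlinarith [mul_le_mul_of_nonneg_left h2 hnms]
  have hnnH : 0 ≤ n (ΦH + QΦH) * nH ΦH := mul_nonneg hnms hnH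
  rcases le_or_gt 0 (α - 2 * C * H) with hcase | hcase
  · -- good case
    have hC2ge : 2 * C ≤ C₂ := by
      rw [hC2def]
      have : 0 ≤ 2 * C * (2 * α + B * C ^ 2 * K) / α := by positivity
      linarith
    rcases le_or_gt (α - C₂ * H) 0 with hneg | hpos
    · have hL : 1 / C * (α - C₂ * H) * n (ΦH + QΦH) * nH ΦH ≤ 0 := by
        have h0 : 1 / C * (α - C₂ * H) ≤ 0 := by
          have : (0:ℝ) < 1 / C := by positivity
          nlinarith
        nlinarith [mul_nonpos_of_nonpos_of_nonneg h0 hnnH]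
      nlinarith [hfirst, sq_nonneg (n (ΦH + QΦH)), hL]
    · have key : 1 / C * (α - C₂ * H) * (n (ΦH + QΦH) * nH ΦH)
          ≤ 1 / C * (α - C₂ * H) * (C * (n (ΦH + QΦH)) ^ 2) :=
        mul_le_mul_of_nonneg_left hn2 (by positivity)
      have hred : 1 / C * (α - C₂ * H) * (C * (n (ΦH + QΦH)) ^ 2)
          = (α - C₂ * H) * (n (ΦH + QΦH)) ^ 2 := by
        field_simp
      have hmono : (α - C₂ * H) * (n (ΦH + QΦH)) ^ 2
          ≤ (α - 2 * C * H) * (n (ΦH + QΦH)) ^ 2 := by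
        have h6 : 2 * C * H ≤ C₂ * H := mul_le_mul_of_nonneg_right hC2ge hH.le
        nlinarith [sq_nonneg (n (ΦH + QΦH))]
      calc 1 / C * (α - C₂ * H) * n (ΦH + QΦH) * nH ΦH
          = 1 / C * (α - C₂ * H) * (n (ΦH + QΦH) * nH ΦH) := by ring
        _ ≤ (α - C₂ * H) * (n (ΦH + QΦH)) ^ 2 := by rw [← hred]; exact key
        _ ≤ (α - 2 * C * H) * (n (ΦH + QΦH)) ^ 2 := hmono
        _ ≤ a (ΦH + QΦH) ΦH := hfirst
  · -- bad case : H > α/(2C)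
    have hH0 : α / (2 * C) < H := by
      rw [div_lt_iff₀ (by positivity)]
      nlinarith
    have hKle : H ^ ((1 - m) / 2) ≤ K := by
      rw [hKdef]
      exact Real.rpow_le_rpow_of_nonpos (by positivity) hH0.le (by linarith)
    have hΦH : n ΦH ≤ C * K * nH ΦH := by
      refine le_trans h1 ?_
      have := mul_le_mul_of_nonneg_right (mul_le_mul_of_nonneg_left hKle hC.le) hnH
      linarith [this]
    have ha : -(B * C * K * (n (ΦH + QΦH) * nH ΦH)) ≤ a (ΦH + QΦH) ΦH := by
      have hl := hlow (ΦH + QΦH) ΦH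
      have h7 : B * n (ΦH + QΦH) * n ΦH ≤ B * n (ΦH + QΦH) * (C * K * nH ΦH) :=
        mul_le_mul_of_nonneg_left hΦH (by positivity)
      nlinarith [hl]
    have hcoef : 1 / C * (α - C₂ * H) ≤ -(B * C * K) := by
      have h4 : C₂ * (α / (2 * C)) ≤ C₂ * H :=
        mul_le_mul_of_nonneg_left hH0.le hC2pos.le
      have h5 : C₂ * (α / (2 * C)) = 3 * α + B * C ^ 2 * K := by
        rw [hC2def]; field_simp; ring
      rw [div_mul_eq_mul_div, div_le_iff₀ hC]
      nlinarith [h4, h5]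
    calc 1 / C * (α - C₂ * H) * n (ΦH + QΦH) * nH ΦH
        = 1 / C * (α - C₂ * H) * (n (ΦH + QΦH) * nH ΦH) := by ring
      _ ≤ -(B * C * K) * (n (ΦH + QΦH) * nH ΦH) :=
          mul_le_mul_of_nonneg_right hcoef hnnH
      _ = -(B * C * K * (n (ΦH + QΦH) * nH ΦH)) := by ring
      _ ≤ a (ΦH + QΦH) ΦH := ha
end
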